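/- Let Π be a monotone skew-product semiflow on X₊ × Y over the minimal base flow, let K ⊆ X₊ × Y be a compact invariant set admitting a minimal flow extension, and let p* : Y → X₊ be a 1-cover of Y. If (z,y) ∈ K satisfies p*(y) ≤ z, then u(t,p*(y),y) ≤ u(t,z,y) for all t ∈ ℝ; that is, p*(y·t) ≤ u(t,z,y) for every t ∈ ℝ, where for t < 0 the value u(t,z,y) is taken along the flow extension of K. -/

import Mathlib

open Set Filter Topology

section SkewProductFramework

variable {X Y : Type*} [NormedAddCommGroup X] [NormedSpace ℝ X]
  [MetricSpace Y] [CompactSpace Y]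

/-- A continuous flow on `Y`. -/
structure IsFlow (σ : ℝ → Y → Y) : Prop where
  cont : Continuous fun p : ℝ × Y => σ p.1 p.2
  map_zero : ∀ y, σ 0 y = y
  map_add : ∀ s t : ℝ, ∀ y, σ (s + t) y = σ s (σ t y)

/-- The flow on `Y` is minimal: no nonempty compact invariant subset other than `Y`. -/
def IsMinimalFlow (σ : ℝ → Y → Y) : Prop :=
  ∀ S : Set Y, S.Nonempty → IsCompact S → (∀ t, σ t '' S = S) → S = univ

/-- `Xp` is a closed (pointed, convex) positive cone in `X`. -/
structure IsClosedCone (Xp : Set X) : Prop where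
  closed : IsClosed Xp
  zero_mem : (0 : X) ∈ Xp
  add_mem : ∀ a ∈ Xp, ∀ b ∈ Xp, a + b ∈ Xp
  smul_mem : ∀ c : ℝ, 0 ≤ c → ∀ x ∈ Xp, c • x ∈ Xp
  eq_zero : ∀ x ∈ Xp, -x ∈ Xp → x = 0

/-- Order induced by the cone: `a ≤ b` iff `b - a ∈ Xp`. -/
def coneLE (Xp : Set X) (a b : X) : Prop := b - a ∈ Xp

/-- Strict order induced by the cone. -/
def coneLT (Xp : Set X) (a b : X) : Prop := coneLE Xp a b ∧ a ≠ b

/-- `U < V` for sets: every element of `U` is strictly below every element of `V`. -/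
def setLT (Xp : Set X) (U V : Set X) : Prop := ∀ a ∈ U, ∀ b ∈ V, coneLT Xp a b

/-- A skew-product semiflow `Π_t(x,y) = (u t x y, σ t y)` on `Xp × Y`. -/
structure IsSkewProduct (Xp : Set X) (σ : ℝ → Y → Y) (u : ℝ → X → Y → X) : Prop where
  cont : ContinuousOn (fun p : ℝ × X × Y => u p.1 p.2.1 p.2.2)
    (Ici (0 : ℝ) ×ˢ Xp ×ˢ (univ : Set Y))
  mem : ∀ t ≥ (0:ℝ), ∀ x ∈ Xp, ∀ y : Y, u t x y ∈ Xp
  map_zero : ∀ x ∈ Xp, ∀ y : Y, u 0 x y = x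
  map_add : ∀ t ≥ (0:ℝ), ∀ s ≥ (0:ℝ), ∀ x ∈ Xp, ∀ y : Y,
    u (t + s) x y = u t (u s x y) (σ s y)

/-- Forward orbit `O⁺(x,y)`. -/
def fwdOrbit (σ : ℝ → Y → Y) (u : ℝ → X → Y → X) (x : X) (y : Y) : Set (X × Y) :=
  {p | ∃ t ≥ (0:ℝ), p = (u t x y, σ t y)}

/-- Omega-limit set `ω(x,y)`. -/
def omegaSet (σ : ℝ → Y → Y) (u : ℝ → X → Y → X) (x : X) (y : Y) : Set (X × Y) :=
  {p | ∃ tn : ℕ → ℝ, Tendsto tn atTop atTop ∧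
        Tendsto (fun k => (u (tn k) x y, σ (tn k) y)) atTop (𝓝 p)}

/-- Uniform stability of the forward orbit `O⁺(x₀,y₀)`. -/
def IsUnifStable (Xp : Set X) (u : ℝ → X → Y → X) (x₀ : X) (y₀ : Y) : Prop :=
  ∀ ε > (0:ℝ), ∃ δ > (0:ℝ), ∀ x ∈ Xp, ∀ s ≥ (0:ℝ),
    ‖u s x₀ y₀ - u s x y₀‖ ≤ δ →
      ∀ t ≥ (0:ℝ), ‖u (t + s) x₀ y₀ - u (t + s) x y₀‖ < ε

/-- Monotonicity of the skew-product semiflow. -/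
def IsMonotoneSP (Xp : Set X) (u : ℝ → X → Y → X) : Prop :=
  ∀ t ≥ (0:ℝ), ∀ y : Y, ∀ x₁ ∈ Xp, ∀ x₂ ∈ Xp,
    coneLE Xp x₁ x₂ → coneLE Xp (u t x₁ y) (u t x₂ y)

/-- Strongly order-preserving skew-product semiflow. -/
def IsSOP (Xp : Set X) (u : ℝ → X → Y → X) : Prop :=
  IsMonotoneSP Xp u ∧
  ∃ t₀ > (0:ℝ), ∀ y : Y, ∀ x₁ ∈ Xp, ∀ x₂ ∈ Xp, coneLT Xp x₁ x₂ →
    ∃ U V : Set X, IsOpen U ∧ IsOpen V ∧ x₁ ∈ U ∧ x₂ ∈ V ∧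
      ∀ t ≥ t₀, setLT Xp ((fun x => u t x y) '' (U ∩ Xp)) ((fun x => u t x y) '' (V ∩ Xp))

/-- Fiber-compactness. -/
def IsFiberCompact (Xp : Set X) (u : ℝ → X → Y → X) : Prop :=
  ∃ tb > (0:ℝ), ∀ y : Y, ∀ B ⊆ Xp, Bornology.IsBounded B →
    ∀ t > tb, IsCompact (closure ((fun x => u t x y) '' B))

/-- A 1-cover of `Y`, described by its graph map `c : Y → X`. -/
def IsOneCoverMap (Xp : Set X) (σ : ℝ → Y → Y) (u : ℝ → X → Y → X) (c : Y → X) : Prop :=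
  Continuous c ∧ (∀ y, c y ∈ Xp) ∧ ∀ t ≥ (0:ℝ), ∀ y, u t (c y) y = c (σ t y)

/-- A compact positively invariant set that is a 1-cover of `Y`. -/
def IsOneCoverSet (Xp : Set X) (σ : ℝ → Y → Y) (u : ℝ → X → Y → X)
    (K : Set (X × Y)) : Prop :=
  IsCompact K ∧ (∀ p ∈ K, p.1 ∈ Xp) ∧
  (∀ t ≥ (0:ℝ), ∀ p ∈ K, (u t p.1 p.2, σ t p.2) ∈ K) ∧
  ∀ y : Y, ∃! x : X, (x, y) ∈ K

/-- `Φ` is a (two-sided) flow extension of the semiflow on `K`. -/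
def IsFlowExtension (σ : ℝ → Y → Y) (u : ℝ → X → Y → X) (K : Set (X × Y))
    (Φ : ℝ → X × Y → X × Y) : Prop :=
  ContinuousOn (fun q : ℝ × (X × Y) => Φ q.1 q.2) ((univ : Set ℝ) ×ˢ K) ∧
  (∀ t : ℝ, MapsTo (Φ t) K K) ∧
  (∀ p ∈ K, Φ 0 p = p) ∧
  (∀ s t : ℝ, ∀ p ∈ K, Φ (s + t) p = Φ s (Φ t p)) ∧
  (∀ t ≥ (0:ℝ), ∀ p ∈ K, Φ t p = (u t p.1 p.2, σ t p.2))

/-- The flow extension `Φ` of `K` is minimal. -/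
def IsMinimalExtension (K : Set (X × Y)) (Φ : ℝ → X × Y → X × Y) : Prop :=
  ∀ S : Set (X × Y), S ⊆ K → S.Nonempty → IsCompact S → (∀ t, Φ t '' S = S) → S = K

/-- `Γ` (given by `v`) is upper-comparable with respect to `Π` (given by `u`). -/
def UpperComparable (Xp : Set X) (u v : ℝ → X → Y → X) : Prop :=
  ∀ t ≥ (0:ℝ), ∀ y : Y, ∀ x₁ ∈ Xp, ∀ x₂ ∈ Xp,
    coneLE Xp x₁ x₂ → coneLE Xp (v t x₁ y) (u t x₂ y)

/-- Every nonempty compact subset of `Xp` has a greatest lower bound in `X`. -/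
def HasGLBs (Xp : Set X) : Prop :=
  ∀ S : Set X, S ⊆ Xp → S.Nonempty → IsCompact S →
    ∃ g : X, (∀ s ∈ S, coneLE Xp g s) ∧ ∀ g' : X, (∀ s ∈ S, coneLE Xp g' s) → coneLE Xp g' g

end SkewProductFramework

/-- For a monotone skew-product semiflow, a compact invariant set `K`
admitting a minimal flow extension `Φ`, and a 1-cover `p*`, if `(z,y) ∈ K` with
`p* y ≤ z` then `p*(y·t) ≤ u(t,z,y)` for all `t ∈ ℝ`, where for `t < 0` the value
is taken along the flow extension. -/
theorem one_cover_below_minimal_set_all_times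
    {X Y : Type*} [NormedAddCommGroup X] [NormedSpace ℝ X] [MetricSpace Y] [CompactSpace Y]
    (σ : ℝ → Y → Y) (Xp : Set X) (u : ℝ → X → Y → X)
    (hflow : IsFlow σ) (hmin : IsMinimalFlow σ) (hcone : IsClosedCone Xp)
    (hsp : IsSkewProduct Xp σ u) (hmono : IsMonotoneSP Xp u)
    (K : Set (X × Y)) (hKcomp : IsCompact K) (hKXp : ∀ p ∈ K, p.1 ∈ Xp)
    (Φ : ℝ → X × Y → X × Y) (hΦ : IsFlowExtension σ u K Φ)
    (hΦmin : IsMinimalExtension K Φ)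
    (p : Y → X) (hp : IsOneCoverMap Xp σ u p)
    (z : X) (y : Y) (hz : (z, y) ∈ K) (hle : coneLE Xp (p y) z) :
    ∀ t : ℝ, coneLE Xp (p (σ t y)) ((Φ t (z, y)).1) := by
  obtain ⟨hΦcont, hΦmaps, hΦzero, hΦadd, hΦpos⟩ := hΦ
  obtain ⟨hpc, hpXp, hpu⟩ := hp
  set S : Set (X × Y) := {q ∈ K | coneLE Xp (p q.2) q.1} with hS
  have hSsub : S ⊆ K := fun q hq => hq.1
  have hSne : S.Nonempty := ⟨(z, y), hz, hle⟩
  have hSclosed : IsClosed S := by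
    have hEq : S = K ∩ (fun q : X × Y => q.1 - p q.2) ⁻¹' Xp := by
      ext q; simp [hS, coneLE, Set.mem_inter_iff, Set.mem_preimage]
    rw [hEq]
    exact hKcomp.isClosed.inter
      (hcone.closed.preimage (continuous_fst.sub (hpc.comp continuous_snd)))
  have hScomp : IsCompact S := hKcomp.of_isClosed_subset hSclosed hSsub
  have hSfwd : ∀ t ≥ (0:ℝ), MapsTo (Φ t) S S := by
    intro t ht q hq
    have hqK := hq.1
    have h1 : Φ t q = (u t q.1 q.2, σ t q.2) := hΦpos t ht q hqK
    refine ⟨hΦmaps t hqK, ?_⟩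
    have h2 := hmono t ht q.2 (p q.2) (hpXp q.2) q.1 (hKXp q hqK) hq.2
    rw [h1]
    simpa [hpu t ht q.2] using h2
  have hΦtcont : ∀ t : ℝ, ContinuousOn (Φ t) K := by
    intro t
    have hc : ContinuousOn (fun q : X × Y => ((t, q) : ℝ × (X × Y))) K :=
      (continuous_const.prodMk continuous_id).continuousOn
    exact hΦcont.comp hc (fun q hq => ⟨Set.mem_univ t, hq⟩)
  have hΦinv : ∀ t : ℝ, ∀ q ∈ K, Φ (-t) (Φ t q) = q := by
    intro t q hq
    rw [← hΦadd (-t) t q hq, neg_add_cancel, hΦzero q hq]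
  have hΦinj : ∀ t : ℝ, Set.InjOn (Φ t) K := by
    intro t q hq q' hq' h
    have h1 := hΦinv t q hq
    rw [h, hΦinv t q' hq'] at h1
    exact h1.symm
  have hAsub : ∀ t : ℝ, Φ t '' S ⊆ K :=
    fun t => Set.image_subset_iff.2 fun q hq => hΦmaps t (hSsub hq)
  have hAanti : ∀ s t : ℝ, s ≤ t → Φ t '' S ⊆ Φ s '' S := by
    intro s t hst
    have hEq : Φ t '' S = Φ s '' (Φ (t - s) '' S) := by
      rw [← Set.image_comp]
      apply Set.image_congr
      intro q hq
      have h1 : Φ (s + (t - s)) q = Φ s (Φ (t - s) q) := hΦadd s (t - s) q (hSsub hq)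
      simpa using h1
    rw [hEq]
    exact Set.image_mono ((hSfwd (t - s) (by linarith)).image_subset)
  have hAcomp : ∀ t : ℝ, IsCompact (Φ t '' S) :=
    fun t => hScomp.image_of_continuousOn ((hΦtcont t).mono hSsub)
  have hSiNe : (⋂ t : ℝ, Φ t '' S).Nonempty := by
    apply IsCompact.nonempty_iInter_of_directed_nonempty_isCompact_isClosed
    · intro s t
      exact ⟨max s t, hAanti s (max s t) (le_max_left s t),
        hAanti t (max s t) (le_max_right s t)⟩
    · exact fun t => hSne.image _
    · exact hAcomp
    · exact fun t => (hAcomp t).isClosed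
  have hcomp : ∀ s t : ℝ, Φ s '' (Φ t '' S) = Φ (s + t) '' S := by
    intro s t
    rw [← Set.image_comp]
    exact Set.image_congr fun q hq =>
      show (Φ s ∘ Φ t) q = Φ (s + t) q from (hΦadd s t q (hSsub hq)).symm
  have himg : ∀ s : ℝ, Φ s '' (⋂ t : ℝ, Φ t '' S) = ⋂ t : ℝ, Φ t '' S := by
    intro s
    have hinj : Set.InjOn (Φ s) (⋃ t : ℝ, Φ t '' S) :=
      (hΦinj s).mono (Set.iUnion_subset hAsub)
    rw [hinj.image_iInter_eq]
    have h1 : (⋂ t : ℝ, Φ s '' (Φ t '' S)) = ⋂ t : ℝ, Φ (s + t) '' S := by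
      exact Set.iInter_congr fun t => hcomp s t
    rw [h1]
    apply subset_antisymm
    · intro q hq
      simp only [Set.mem_iInter] at hq ⊢
      intro t
      have h2 := hq (t - s)
      have h3 : s + (t - s) = t := by ring
      rwa [h3] at h2
    · intro q hq
      simp only [Set.mem_iInter] at hq ⊢
      intro t
      exact hq (s + t)
  have hSisub : (⋂ t : ℝ, Φ t '' S) ⊆ K :=
    (Set.iInter_subset _ 0).trans (hAsub 0)
  have hSicomp : IsCompact (⋂ t : ℝ, Φ t '' S) :=
    hKcomp.of_isClosed_subset (isClosed_iInter fun t => (hAcomp t).isClosed) hSisub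
  have hKeq : (⋂ t : ℝ, Φ t '' S) = K :=
    hΦmin _ hSisub hSiNe hSicomp himg
  have hΦ0S : Φ 0 '' S = S := by
    have h1 : Φ 0 '' S = (fun q => q) '' S :=
      Set.image_congr fun q hq => hΦzero q (hSsub hq)
    rw [h1, Set.image_id']
  have hKS : ∀ q ∈ K, coneLE Xp (p q.2) q.1 := by
    intro q hq
    have hq' : q ∈ ⋂ t : ℝ, Φ t '' S := hKeq ▸ hq
    have h1 := Set.mem_iInter.1 hq' 0
    rw [hΦ0S] at h1
    exact h1.2
  intro t
  have hmem : Φ t (z, y) ∈ K := hΦmaps t hz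
  have hsnd : (Φ t (z, y)).2 = σ t y := by
    rcases le_or_gt 0 t with ht | ht
    · rw [hΦpos t ht (z, y) hz]
    · have h1 : Φ (-t) (Φ t (z, y)) = (z, y) := hΦinv t (z, y) hz
      have h2 : Φ (-t) (Φ t (z, y)) =
          (u (-t) (Φ t (z, y)).1 (Φ t (z, y)).2, σ (-t) (Φ t (z, y)).2) :=
        hΦpos (-t) (by linarith) _ hmem
      have h3 : σ (-t) (Φ t (z, y)).2 = y := by
        rw [h2] at h1; exact congrArg Prod.snd h1
      have h4 : σ t (σ (-t) (Φ t (z, y)).2) = σ t y := by rw [h3]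
      rwa [← hflow.map_add, add_neg_cancel, hflow.map_zero] at h4
  have h5 := hKS _ hmem
  rwa [hsnd] at h5
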